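/- Let δ : ℕ → ℝ be a nonnegative nonincreasing sequence, let a ≥ 0, b ≥ 0 and γ ≥ 1, and suppose δ (k+1) ≤ a·(δ k - δ (k+1)) + b·(δ k - δ (k+1))^γ for all k. Then there exists K ∈ ℕ such that for all k ≥ K: δ (k+1) ≤ ((a+b)/(1+a+b))·δ k; in particular δ k converges to 0 at a linear rate. -/
import Mathlib


/-- Recurrence lemma: a nonnegative nonincreasing sequence satisfying
`δ (k+1) ≤ a·(δ k - δ (k+1)) + b·(δ k - δ (k+1))^γ` with `γ ≥ 1` eventually contracts
linearly with factor `(a+b)/(1+a+b)`, and hence converges to 0. -/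
theorem recurrence_eventual_linear_rate
    (δ : ℕ → ℝ) (hnn : ∀ k : ℕ, 0 ≤ δ k) (hmono : ∀ k : ℕ, δ (k + 1) ≤ δ k)
    (a b γ : ℝ) (ha : 0 ≤ a) (hb : 0 ≤ b) (hγ : 1 ≤ γ)
    (hrec : ∀ k : ℕ, δ (k + 1) ≤ a * (δ k - δ (k + 1)) + b * (δ k - δ (k + 1)) ^ γ) :
    ∃ K : ℕ, (∀ k : ℕ, K ≤ k → δ (k + 1) ≤ ((a + b) / (1 + a + b)) * δ k) ∧
      Filter.Tendsto δ Filter.atTop (nhds 0) := by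
  have hanti : Antitone δ := antitone_nat_of_succ_le hmono
  have hbdd : BddBelow (Set.range δ) := ⟨0, by rintro x ⟨k, rfl⟩; exact hnn k⟩
  set L : ℝ := ⨅ k, δ k with hL
  have hlim : Filter.Tendsto δ Filter.atTop (nhds L) :=
    tendsto_atTop_ciInf hanti hbdd
  have hlim' : Filter.Tendsto (fun k => δ (k + 1)) Filter.atTop (nhds L) :=
    hlim.comp (Filter.tendsto_add_atTop_nat 1)
  have hdiff : Filter.Tendsto (fun k => δ k - δ (k + 1)) Filter.atTop (nhds 0) := by
    simpa using hlim.sub hlim'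
  -- eventually the difference is ≤ 1
  have hev : ∀ᶠ k in Filter.atTop, δ k - δ (k + 1) < 1 := by
    have := hdiff.eventually (eventually_lt_nhds (by norm_num : (0:ℝ) < 1))
    exact this
  obtain ⟨K, hK⟩ := Filter.eventually_atTop.mp hev
  have hpos : (0:ℝ) < 1 + a + b := by linarith
  have hcontr : ∀ k : ℕ, K ≤ k → δ (k + 1) ≤ ((a + b) / (1 + a + b)) * δ k := by
    intro k hk
    have hd0 : 0 ≤ δ k - δ (k + 1) := by linarith [hmono k]
    have hd1 : δ k - δ (k + 1) ≤ 1 := (hK k hk).le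
    have hpow : (δ k - δ (k + 1)) ^ γ ≤ δ k - δ (k + 1) := by
      rcases eq_or_lt_of_le hd0 with h | h
      · rw [← h, Real.zero_rpow (by linarith : γ ≠ 0)]
      · calc (δ k - δ (k + 1)) ^ γ ≤ (δ k - δ (k + 1)) ^ (1:ℝ) :=
              Real.rpow_le_rpow_of_exponent_ge h hd1 hγ
          _ = δ k - δ (k + 1) := Real.rpow_one _
    have h1 : δ (k + 1) ≤ (a + b) * (δ k - δ (k + 1)) := by
      have := hrec k
      nlinarith [mul_le_mul_of_nonneg_left hpow hb]
    rw [div_mul_eq_mul_div, le_div_iff₀ hpos]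
    nlinarith
  refine ⟨K, hcontr, ?_⟩
  have hL0 : L = 0 := by
    have hLnn : 0 ≤ L := le_ciInf hnn
    set c := (a + b) / (1 + a + b) with hc
    have hc1 : c < 1 := by
      rw [hc, div_lt_one hpos]; linarith
    have hlimc : Filter.Tendsto (fun k => c * δ k) Filter.atTop (nhds (c * L)) :=
      hlim.const_mul c
    have hle : L ≤ c * L :=
      le_of_tendsto_of_tendsto hlim' hlimc
        (Filter.eventually_atTop.mpr ⟨K, hcontr⟩)
    nlinarith
  rwa [hL0] at hlim
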